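/- Let K be a compact convex subset of a locally convex Hausdorff real topological vector space, and let f : K → ℝ ∪ {∞} be lower semicontinuous and concave. Then the infimum of f over K equals the minimum of f over the set of extreme points of K; in particular f attains its infimum at an extreme point of K. -/

import Mathlib

open scoped Topology

open Set Filter

private lemma bauer_aux_sublevel_closed {E : Type*} [TopologicalSpace E] {K : Set E}
    (hKcl : IsClosed K) {f : E → EReal} (hlsc : LowerSemicontinuousOn f K) (c : EReal) :
    IsClosed {x ∈ K | f x ≤ c} := by
  apply isClosed_of_closure_subset
  intro z hz
  have hzK : z ∈ K := hKcl.closure_subset (closure_mono (fun x hx => hx.1) hz)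
  refine ⟨hzK, ?_⟩
  by_contra h
  push_neg at h
  have hev : ∀ᶠ x in 𝓝[K] z, c < f x := hlsc z hzK c h
  have hne : (𝓝[{x ∈ K | f x ≤ c}] z).NeBot := mem_closure_iff_nhdsWithin_neBot.mp hz
  have hev' : ∀ᶠ x in 𝓝[{x ∈ K | f x ≤ c}] z, c < f x :=
    hev.filter_mono (nhdsWithin_mono z (fun x hx => hx.1))
  obtain ⟨x, hcx, hxS⟩ := (hev'.and eventually_mem_nhdsWithin).exists
  exact absurd hxS.2 (not_le.2 hcx)

private lemma bauer_aux_cancel {a : ℝ} (ha : 0 < a) {x y : EReal}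
    (h : (a : EReal) * x ≤ (a : EReal) * y) : x ≤ y := by
  have hinv : (0 : EReal) ≤ ((a⁻¹ : ℝ) : EReal) := by
    exact_mod_cast inv_nonneg.mpr ha.le
  have h2 := mul_le_mul_of_nonneg_left h hinv
  rwa [← mul_assoc, ← mul_assoc, ← EReal.coe_mul, inv_mul_cancel₀ ha.ne', EReal.coe_one,
    one_mul, one_mul] at h2

private lemma bauer_aux_face {a : ℝ} (ha : 0 < a) (ha1 : a < 1) {μ : ℝ} {u v : EReal}
    (h : (a : EReal) * u + ((1 - a : ℝ) : EReal) * v ≤ (μ : EReal))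
    (hv : (μ : EReal) ≤ v) : u ≤ (μ : EReal) := by
  have hb : (0 : ℝ) < 1 - a := by linarith
  have h1 : (a : EReal) * u + (((1 - a) * μ : ℝ) : EReal)
      ≤ (a : EReal) * u + ((1 - a : ℝ) : EReal) * v := by
    apply add_le_add_right
    rw [EReal.coe_mul]
    refine mul_le_mul_of_nonneg_left hv ?_
    exact_mod_cast hb.le
  have h2 : (μ : EReal) = (a : EReal) * (μ : EReal) + (((1 - a) * μ : ℝ) : EReal) := by
    rw [← EReal.coe_mul, ← EReal.coe_add]
    norm_cast
    ring
  have h3 : (a : EReal) * u + (((1 - a) * μ : ℝ) : EReal)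
      ≤ (a : EReal) * (μ : EReal) + (((1 - a) * μ : ℝ) : EReal) := by
    rw [← h2]
    exact h1.trans h
  exact bauer_aux_cancel ha ((EReal.addLECancellable_coe _).add_le_add_iff_right.mp h3)

/-- Bauer's minimum principle: a lower semicontinuous concave
function (with values in `(-∞, ∞]`, modeled inside `EReal`) on a nonempty
compact convex subset of a locally convex Hausdorff real topological vector
space attains its infimum over `K` at an extreme point of `K`. -/
theorem bauer_minimum_principle {E : Type*} [AddCommGroup E] [Module ℝ E]
    [TopologicalSpace E] [IsTopologicalAddGroup E] [ContinuousSMul ℝ E]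
    [T2Space E] [LocallyConvexSpace ℝ E]
    (K : Set E) (hKne : K.Nonempty) (hKcpt : IsCompact K) (hKcvx : Convex ℝ K)
    (f : E → EReal) (hfbot : ∀ x ∈ K, f x ≠ ⊥)
    (hlsc : LowerSemicontinuousOn f K)
    (hconc : ∀ x ∈ K, ∀ y ∈ K, ∀ t : ℝ, 0 ≤ t → t ≤ 1 →
      (t : EReal) * f x + ((1 - t : ℝ) : EReal) * f y ≤ f (t • x + (1 - t) • y)) :
    ∃ x ∈ Set.extremePoints ℝ K, (∀ y ∈ K, f x ≤ f y) ∧ f x = ⨅ y ∈ K, f y := by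
  set m := ⨅ y ∈ K, f y with hm
  have hmle : ∀ y ∈ K, m ≤ f y := fun y hy => iInf₂_le y hy
  have hKcl : IsClosed K := hKcpt.isClosed
  by_cases hmtop : m = ⊤
  · -- all values are ⊤
    obtain ⟨x, hx⟩ := hKcpt.extremePoints_nonempty hKne
    have hall : ∀ y ∈ K, f y = ⊤ := fun y hy => top_le_iff.mp (hmtop ▸ hmle y hy)
    refine ⟨x, hx, fun y hy => ?_, ?_⟩
    · rw [hall x hx.1, hall y hy]
    · rw [hall x hx.1, hmtop]
  · -- there exists a minimizer
    have hex : ∃ z ∈ K, f z ≤ m := by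
      have hne : Nonempty {r : EReal // m < r} := ⟨⟨⊤, lt_top_iff_ne_top.mpr hmtop⟩⟩
      set t : {r : EReal // m < r} → Set E := fun r => {x ∈ K | f x ≤ r.1} with ht
      have htd : Directed (· ⊇ ·) t := by
        intro r s
        refine ⟨⟨min r.1 s.1, lt_min r.2 s.2⟩, fun x hx => ⟨hx.1, hx.2.trans ?_⟩,
          fun x hx => ⟨hx.1, hx.2.trans ?_⟩⟩
        · exact min_le_left _ _
        · exact min_le_right _ _
      have htn : ∀ r, (t r).Nonempty := by
        rintro ⟨r, hr⟩
        have : (⨅ y ∈ K, f y) < r := hm ▸ hr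
        simp only [iInf_lt_iff] at this
        obtain ⟨y, hy, hfy⟩ := this
        exact ⟨y, hy, hfy.le⟩
      have htcl : ∀ r, IsClosed (t r) := fun r =>
        bauer_aux_sublevel_closed hKcl hlsc r.1
      have htc : ∀ r, IsCompact (t r) := fun r =>
        hKcpt.of_isClosed_subset (htcl r) (fun x hx => hx.1)
      obtain ⟨z, hz⟩ :=
        IsCompact.nonempty_iInter_of_directed_nonempty_isCompact_isClosed t htd htn htc htcl
      rw [mem_iInter] at hz
      have hzK : z ∈ K := (hz ⟨⊤, lt_top_iff_ne_top.mpr hmtop⟩).1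
      refine ⟨z, hzK, le_of_forall_gt_imp_ge_of_dense fun r hr => (hz ⟨r, hr⟩).2⟩
    obtain ⟨z, hzK, hzm⟩ := hex
    have hmbot : m ≠ ⊥ := fun h => hfbot z hzK (le_bot_iff.mp (h ▸ hzm))
    set μ := m.toReal with hμdef
    have hμ : (μ : EReal) = m := EReal.coe_toReal hmtop hmbot
    set A : Set E := {x ∈ K | f x ≤ m} with hA
    have hAne : A.Nonempty := ⟨z, hzK, hzm⟩
    have hAcl : IsClosed A := bauer_aux_sublevel_closed hKcl hlsc m
    have hAcpt : IsCompact A := hKcpt.of_isClosed_subset hAcl (fun x hx => hx.1)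
    have hExt : IsExtreme ℝ K A := by
      refine ⟨fun x hx => hx.1, ?_⟩
      intro x₁ hx₁ x₂ hx₂ x hxA hxseg
      obtain ⟨a, b, ha, hb, hab, hxe⟩ := hxseg
      have hb' : b = 1 - a := by linarith
      subst hb'
      have ha1 : a < 1 := by linarith
      have hkey : (a : EReal) * f x₁ + ((1 - a : ℝ) : EReal) * f x₂ ≤ (μ : EReal) := by
        rw [hμ]
        calc (a : EReal) * f x₁ + ((1 - a : ℝ) : EReal) * f x₂
            ≤ f (a • x₁ + (1 - a) • x₂) := hconc x₁ hx₁ x₂ hx₂ a ha.le ha1.le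
          _ = f x := by rw [hxe]
          _ ≤ m := hxA.2
      · refine ⟨hx₁, ?_⟩
        rw [← hμ]
        exact bauer_aux_face ha ha1 hkey (hμ ▸ hmle x₂ hx₂)
    obtain ⟨x, hxA⟩ := hAcpt.extremePoints_nonempty hAne
    have hxK : x ∈ K.extremePoints ℝ := hExt.extremePoints_subset_extremePoints hxA
    have hxmem : x ∈ A := hxA.1
    exact ⟨x, hxK, fun y hy => hxmem.2.trans (hmle y hy),
      le_antisymm hxmem.2 (hmle x hxmem.1)⟩
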